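/- Let A be an n×n matrix over a field with Ax = b having a unique solution x, and suppose the 2×2 Chiò condensation (with pivot a_{nn} ≠ 0) is applied to the augmented system: e_{ij} = a_{ij}a_{nn} − a_{in}a_{nj} and b'_i = b_i a_{nn} − a_{in} b_n for i,j = 1,…,n−1. Then the system E y = b' has the unique solution y = (x_1,…,x_{n−1}). -/

import Mathlib

open Matrix

/-- Chiò condensation applied to a linear system: if `x` is the unique solution
of `Ax = b` and the pivot `a_{nn} ≠ 0`, then with
`e_{ij} = a_{ij}a_{nn} - a_{in}a_{nj}` and `b'_i = b_i a_{nn} - a_{in} b_n`,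
the system `E y = b'` has `(x_1,…,x_{n-1})` as its unique solution. -/
theorem chio_system_equiv {F : Type*} [Field F] {n : ℕ} (hn : 2 ≤ n)
    (A : Matrix (Fin n) (Fin n) F) (b x : Fin n → F)
    (lastIdx : Fin n) (hlast : (lastIdx : ℕ) = n - 1)
    (ha : A lastIdx lastIdx ≠ 0)
    (hx : A.mulVec x = b) (huniq : ∀ z, A.mulVec z = b → z = x)
    (E : Matrix (Fin (n - 1)) (Fin (n - 1)) F)
    (hE : ∀ i j : Fin (n - 1),
      E i j = A ⟨i, by have := i.isLt; omega⟩ ⟨j, by have := j.isLt; omega⟩ * A lastIdx lastIdx -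
        A ⟨i, by have := i.isLt; omega⟩ lastIdx * A lastIdx ⟨j, by have := j.isLt; omega⟩)
    (b' : Fin (n - 1) → F)
    (hb' : ∀ i : Fin (n - 1),
      b' i = b ⟨i, by have := i.isLt; omega⟩ * A lastIdx lastIdx -
        A ⟨i, by have := i.isLt; omega⟩ lastIdx * b lastIdx) :
    E.mulVec (fun i : Fin (n - 1) => x ⟨i, by have := i.isLt; omega⟩) = b' ∧
      ∀ y : Fin (n - 1) → F, E.mulVec y = b' →
        y = fun i : Fin (n - 1) => x ⟨i, by have := i.isLt; omega⟩ := by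
  obtain ⟨m, rfl⟩ : ∃ m, n = m + 1 := ⟨n - 1, by omega⟩
  have hlast' : lastIdx = Fin.last m := Fin.ext (by simpa using hlast)
  subst hlast'
  set a := A (Fin.last m) (Fin.last m) with ha_def
  have hE' : ∀ i j : Fin m,
      E i j = A i.castSucc j.castSucc * a -
        A i.castSucc (Fin.last m) * A (Fin.last m) j.castSucc := hE
  have hb'' : ∀ i : Fin m,
      b' i = b i.castSucc * a - A i.castSucc (Fin.last m) * b (Fin.last m) := hb'
  -- row equations of the original system
  have hrow : ∀ i : Fin (m + 1),
      (∑ j : Fin m, A i j.castSucc * x j.castSucc) + A i (Fin.last m) * x (Fin.last m)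
        = b i := by
    intro i
    have := congrFun hx i
    simpa [mulVec, dotProduct, Fin.sum_univ_castSucc] using this
  constructor
  · funext i
    show ∑ j : Fin m, E i j * x j.castSucc = b' i
    rw [hb'' i]
    have hsum : ∑ j : Fin m, E i j * x j.castSucc
        = a * (∑ j : Fin m, A i.castSucc j.castSucc * x j.castSucc)
          - A i.castSucc (Fin.last m) * (∑ j : Fin m, A (Fin.last m) j.castSucc * x j.castSucc) := by
      rw [Finset.mul_sum, Finset.mul_sum, ← Finset.sum_sub_distrib]
      refine Finset.sum_congr rfl fun j _ => ?_
      rw [hE' i j]; ring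
    rw [hsum]
    have h1 := hrow i.castSucc
    have h2 := hrow (Fin.last m)
    linear_combination a * h1 - A i.castSucc (Fin.last m) * h2
  · intro y hy
    -- define the last coordinate of the extended solution
    set S : Fin m → F := fun i => ∑ j : Fin m, A i.castSucc j.castSucc * y j with hS
    set SL : F := ∑ j : Fin m, A (Fin.last m) j.castSucc * y j with hSL
    set t : F := (b (Fin.last m) - SL) / a with ht
    set z : Fin (m + 1) → F := Fin.snoc y t with hz
    have hyrow : ∀ i : Fin m,
        a * S i - A i.castSucc (Fin.last m) * SL
          = b i.castSucc * a - A i.castSucc (Fin.last m) * b (Fin.last m) := by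
      intro i
      have := congrFun hy i
      rw [show E.mulVec y i = ∑ j : Fin m, E i j * y j from rfl, hb'' i] at this
      rw [← this, hS, hSL, Finset.mul_sum, Finset.mul_sum, ← Finset.sum_sub_distrib]
      refine Finset.sum_congr rfl fun j _ => ?_
      rw [hE' i j]; ring
    have hzsol : A.mulVec z = b := by
      funext i
      have hrowz : A.mulVec z i
          = (∑ j : Fin m, A i j.castSucc * y j) + A i (Fin.last m) * t := by
        simp [mulVec, dotProduct, Fin.sum_univ_castSucc, hz]
      rw [hrowz]
      induction i using Fin.lastCases with
      | last =>
        rw [ht, ← hSL, mul_div_cancel₀ _ ha]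
        ring
      | cast i =>
        have := hyrow i
        rw [ht]
        field_simp
        linear_combination hyrow i
    have hzx : z = x := huniq z hzsol
    funext i
    have : z i.castSucc = x i.castSucc := by rw [hzx]
    simp [hz] at this
    exact this
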